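/- arXiv:1910.01082 — 2 statements merged into one kernel-verified Lean document; each statement's English description precedes it below -/
import Mathlib

section
/- Let G be a finite simple graph on n ≥ 2 vertices. Then G has a Hamiltonian path if and only if there exists a set E' ⊆ E(G) with |E'| = n − 1 such that the subgraph of the line graph L(G) induced by E' is acyclic (i.e., L(G) has an induced forest on n − 1 vertices). -/
open SimpleGraph Walk List

namespace Stmt4Aux

set_option linter.unusedSectionVars false

section PartA
variable {V : Type*} {G : SimpleGraph V}

/-- A graph that admits an injective grading into `ℕ` where adjacent vertices differ by
exactly one is acyclic. -/
lemma lemA {α : Type*} (H : SimpleGraph α) (f : α → ℕ) (hinj : Function.Injective f)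
    (hgrad : ∀ a b, H.Adj a b → f a + 1 = f b ∨ f b + 1 = f a) : H.IsAcyclic := by
  classical
  intro v c hc
  obtain ⟨a, ha, hmax⟩ : ∃ a ∈ c.support.toFinset, ∀ b ∈ c.support.toFinset, f b ≤ f a := by
    apply Finset.exists_max_image
    simp [List.toFinset_nonempty_iff, c.support_ne_nil]
  rw [List.mem_toFinset] at ha
  have hmax' : ∀ b ∈ c.support, f b ≤ f a := fun b hb => hmax b (List.mem_toFinset.mpr hb)
  have hc' := hc.rotate ha
  set c' := c.rotate a ha with hc'def
  have hsub : ∀ b ∈ c'.support, b ∈ c.support := by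
    intro b hb
    rw [c'.support_eq_cons] at hb
    rcases List.mem_cons.mp hb with rfl | hb
    · exact ha
    · have hperm := c.support_rotate a ha
      rw [← hc'def] at hperm
      exact List.mem_of_mem_tail (hperm.mem_iff.mp hb)
  clear_value c'
  clear hc'def hc ha
  obtain ⟨b, hab, q, rfl⟩ := Walk.not_nil_iff.mp hc'.not_nil
  have hlen := hc'.three_le_length
  have hnodup := hc'.isTrail.edges_nodup
  obtain ⟨d, had, r, hrev⟩ := Walk.not_nil_iff.mp
    (not_nil_iff_lt_length.mpr (by rw [Walk.length_reverse]; omega) :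
      ¬ (Walk.cons hab q).reverse.Nil)
  -- b and d are in the support
  have hbmem : b ∈ (Walk.cons hab q).support := by
    simp [Walk.support_cons, q.start_mem_support]
  have hdmem : d ∈ (Walk.cons hab q).support := by
    have : d ∈ (Walk.cons hab q).reverse.support := by
      rw [hrev]; simp [Walk.support_cons, r.start_mem_support]
    rwa [Walk.support_reverse, List.mem_reverse] at this
  -- grading forces b = d
  have hb' : f b + 1 = f a := by
    rcases hgrad a b hab with h | h
    · have := hmax' b (hsub b hbmem); omega
    · exact h
  have hd' : f d + 1 = f a := by
    rcases hgrad a d had with h | h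
    · have := hmax' d (hsub d hdmem); omega
    · exact h
  have hbd : b = d := hinj (by omega)
  -- but b ≠ d since the first and last edges of a cycle differ
  have hE : (Walk.cons hab q).edges = s(a, b) :: q.edges := by simp
  have hErev : (Walk.cons hab q).edges.reverse = s(a, d) :: r.edges := by
    rw [← Walk.edges_reverse, hrev]; simp
  have hqlen : q.edges ≠ [] := by
    intro h
    have h1 : q.length = 0 := by rw [← q.length_edges, h]; rfl
    have h2 : (Walk.cons hab q).length = q.length + 1 := by simp
    omega
  subst hbd
  have hmem : s(a, b) ∈ q.edges := by
    have h1 : (Walk.cons hab q).edges.reverse = q.edges.reverse ++ [s(a, b)] := by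
      rw [hE]; simp
    rw [hErev] at h1
    rcases hx : q.edges.reverse with _ | ⟨x, xs⟩
    · exact absurd (List.reverse_eq_nil_iff.mp hx) hqlen
    · rw [hx] at h1
      have : s(a, b) = x := by
        have := congrArg List.head? h1
        simpa using this
      rw [← List.mem_reverse, hx, this]
      exact List.mem_cons_self
  rw [hE] at hnodup
  exact (List.nodup_cons.mp hnodup).1 hmem

lemma path_getVert_inj {u v : V} {p : G.Walk u v} (hp : p.IsPath) :
    ∀ i j, i ≤ p.length → j ≤ p.length → p.getVert i = p.getVert j → i = j := by
  induction p with
  | nil => intro i j hi hj _; simp [Walk.length_nil] at hi hj; omega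
  | @cons u w v h q ih =>
    intro i j hi hj hij
    obtain ⟨hq, hu⟩ := (Walk.cons_isPath_iff h q).mp hp
    match i, j with
    | 0, 0 => rfl
    | 0, j + 1 =>
      exfalso
      apply hu
      rw [Walk.mem_support_iff_exists_getVert]
      exact ⟨j, by simpa using hij.symm, by simpa using hj⟩
    | i + 1, 0 =>
      exfalso
      apply hu
      rw [Walk.mem_support_iff_exists_getVert]
      exact ⟨i, by simpa using hij, by simpa using hi⟩
    | i + 1, j + 1 =>
      have := ih hq i j (by simpa using hi) (by simpa using hj) (by simpa using hij)
      omega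

lemma edges_getElem {u v : V} (p : G.Walk u v) (i : ℕ) (hi : i < p.length) :
    p.edges[i]'(by simpa [Walk.length_edges] using hi) = s(p.getVert i, p.getVert (i + 1)) := by
  induction p generalizing i with
  | nil => simp at hi
  | @cons u w v h q ih =>
    match i with
    | 0 => simp [Walk.edges_cons]
    | i + 1 =>
      have hi' : i < q.length := by simpa using hi
      simpa [Walk.edges_cons] using ih i hi'


end PartA

section PartB
variable {V : Type*} [DecidableEq V] {H : SimpleGraph V} {G : SimpleGraph V}

universe u

lemma maxpath [Fintype V] [Nonempty V] (H : SimpleGraph V) :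
    ∃ (u v : V) (p : H.Walk u v), p.IsPath ∧
      ∀ (a b : V) (q : H.Walk a b), q.IsPath → q.length ≤ p.length := by
  classical
  set P : ℕ → Prop := fun k => ∃ (u v : V) (p : H.Walk u v), p.IsPath ∧ p.length = k with hPdef
  have hP0 : P 0 := ⟨Classical.arbitrary V, _, Walk.nil, Walk.IsPath.nil, rfl⟩
  obtain ⟨u, v, p, hp, hlen⟩ : P (Nat.findGreatest P (Fintype.card V)) :=
    Nat.findGreatest_spec (m := 0) (Nat.zero_le _) hP0
  refine ⟨u, v, p, hp, ?_⟩
  intro a b q hq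
  by_contra hcon
  push_neg at hcon
  rw [hlen] at hcon
  exact Nat.findGreatest_is_greatest hcon hq.length_lt.le ⟨a, b, q, hq, rfl⟩

lemma seg {u v a b : V} (p : H.Walk u v) (hp : p.IsPath)
    (ha : a ∈ p.support) (hb : b ∈ p.support) :
    ∃ q : H.Walk a b, q.IsPath ∧ ∀ e ∈ q.edges, e ∈ p.edges := by
  by_cases hb2 : b ∈ (p.dropUntil a ha).support
  · exact ⟨(p.dropUntil a ha).takeUntil b hb2, (hp.dropUntil ha).takeUntil hb2,
      fun e he => p.edges_dropUntil_subset ha ((p.dropUntil a ha).edges_takeUntil_subset hb2 he)⟩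
  · have hb1 : b ∈ (p.takeUntil a ha).support := by
      have hspec := p.take_spec ha
      rw [← hspec, Walk.mem_support_append_iff] at hb
      tauto
    refine ⟨((p.takeUntil a ha).dropUntil b hb1).reverse, ((hp.takeUntil ha).dropUntil hb1).reverse, ?_⟩
    intro e he
    rw [Walk.edges_reverse, List.mem_reverse] at he
    exact p.edges_takeUntil_subset ha ((p.takeUntil a ha).edges_dropUntil_subset hb1 he)

lemma edge_in_path (hac : H.IsAcyclic) {u v a b : V} {p : H.Walk u v}
    (hp : p.IsPath) (ha : a ∈ p.support) (hb : b ∈ p.support) (hadj : H.Adj a b) :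
    s(a, b) ∈ p.edges := by
  obtain ⟨q, hq, hsub⟩ := seg p hp ha hb
  have h1 : (⟨q, hq⟩ : H.Path a b) = SimpleGraph.Path.singleton hadj :=
    hac.path_unique _ _
  have h2 : q = Walk.cons hadj Walk.nil := congrArg Subtype.val h1
  apply hsub
  rw [h2]
  simp

lemma mem_edges_start {u v w b : V} {h : H.Adj u b} {q : H.Walk b v}
    (hp : (Walk.cons h q).IsPath) (hw : s(u, w) ∈ (Walk.cons h q).edges) : w = b := by
  rw [Walk.edges_cons, List.mem_cons] at hw
  rcases hw with hw | hw
  · rcases Sym2.eq_iff.mp hw with ⟨-, h2⟩ | ⟨h1, -⟩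
    · exact h2
    · exact absurd h1 h.ne
  · exfalso
    have : u ∈ q.support := q.fst_mem_support_of_mem_edges hw
    exact ((Walk.cons_isPath_iff h q).mp hp).2 this

lemma leaf [Fintype V] [Nonempty V] (hac : H.IsAcyclic) :
    ∃ u : V, ∀ a b : V, H.Adj u a → H.Adj u b → a = b := by
  obtain ⟨u, v, p, hp, hmax⟩ := maxpath H
  refine ⟨u, ?_⟩
  have hin : ∀ a, H.Adj u a → a ∈ p.support := by
    intro a hadj
    by_contra hout
    have hq : (Walk.cons hadj.symm p).IsPath := hp.cons hout
    have := hmax _ _ _ hq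
    rw [Walk.length_cons] at this
    omega
  intro a b ha hb
  have hea := edge_in_path hac hp p.start_mem_support (hin a ha) ha
  have heb := edge_in_path hac hp p.start_mem_support (hin b hb) hb
  cases p with
  | nil => simp at hea
  | cons h q => rw [mem_edges_start hp hea, mem_edges_start hp heb]


lemma induce_acyclic (hac : H.IsAcyclic) (s : Set V) : (H.induce s).IsAcyclic := by
  intro v c hc
  exact hac _ (hc.map (f := (SimpleGraph.Embedding.induce (G := H) s).toHom)
    (SimpleGraph.Embedding.induce (G := H) s).injective)

lemma count (H : SimpleGraph V) (s : Set V) :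
    (H.induce s).edgeSet.ncard = {e ∈ H.edgeSet | ∀ v ∈ e, v ∈ s}.ncard := by
  have himg : Sym2.map (Subtype.val) '' (H.induce s).edgeSet
      = {e ∈ H.edgeSet | ∀ v ∈ e, v ∈ s} := by
    ext e
    constructor
    · rintro ⟨e', he', rfl⟩
      induction e' with
      | _ a b =>
        rw [SimpleGraph.mem_edgeSet] at he'
        have hadj : H.Adj ↑a ↑b := he'
        refine ⟨hadj, ?_⟩
        intro w hw
        rw [Sym2.map_pair_eq, Sym2.mem_iff] at hw
        rcases hw with rfl | rfl
        · exact a.2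
        · exact b.2
    · rintro ⟨he, hs⟩
      induction e with
      | _ a b =>
        rw [SimpleGraph.mem_edgeSet] at he
        have ha : a ∈ s := hs a (Sym2.mem_mk_left a b)
        have hb : b ∈ s := hs b (Sym2.mem_mk_right a b)
        refine ⟨s(⟨a, ha⟩, ⟨b, hb⟩), ?_, ?_⟩
        · rw [SimpleGraph.mem_edgeSet]
          exact he
        · rw [Sym2.map_pair_eq]
  rw [← himg, Set.ncard_image_of_injective _ (Sym2.map.injective Subtype.val_injective)]

lemma lemB : ∀ (n : ℕ) {V : Type u} [Fintype V] [DecidableEq V] (H : SimpleGraph V),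
    H.IsAcyclic → Fintype.card V = n → Nonempty V →
    H.edgeSet.ncard + 1 ≤ Fintype.card V := by
  intro n
  induction n using Nat.strong_induction_on with
  | _ n ih =>
    intro V _ _ H hac hcard hne
    haveI := hne
    obtain ⟨u, hu⟩ := leaf hac
    by_cases hV' : Nonempty {v : V // v ≠ u}
    · -- induction step
      have hcard' : Fintype.card ↑{v : V | v ≠ u} = n - 1 := by
        have h1 : Fintype.card {v : V // v = u} = 1 := Fintype.card_subtype_eq u
        have h2 := Fintype.card_subtype_compl (fun v : V => v = u)
        rw [h1, hcard] at h2
        convert h2 using 2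
        rfl
      have hn1 : 1 ≤ n := by
        rw [← hcard]
        exact Fintype.card_pos
      have hn2 : n - 1 < n := by omega
      have hV'' : Nonempty ↑{v : V | v ≠ u} := ⟨⟨hV'.some.1, hV'.some.2⟩⟩
      have hIH := ih (n - 1) hn2 (H.induce {v : V | v ≠ u}) (induce_acyclic hac _)
        hcard' hV''
      rw [hcard'] at hIH
      -- split the edges of H
      have hsplit : H.edgeSet ⊆ {e ∈ H.edgeSet | ∀ v ∈ e, v ∈ ({v : V | v ≠ u} : Set V)}
          ∪ {e ∈ H.edgeSet | u ∈ e} := by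
        intro e he
        by_cases h : u ∈ e
        · exact Or.inr ⟨he, h⟩
        · refine Or.inl ⟨he, ?_⟩
          intro w hw
          intro hwu
          exact h (hwu ▸ hw)
      have h2 : {e ∈ H.edgeSet | u ∈ e}.ncard ≤ 1 := by
        rw [Set.ncard_le_one (Set.toFinite _)]
        rintro e ⟨he, hue⟩ f ⟨hf, huf⟩
        obtain ⟨a, rfl⟩ := Sym2.mem_iff_exists.mp hue
        obtain ⟨b, rfl⟩ := Sym2.mem_iff_exists.mp huf
        rw [SimpleGraph.mem_edgeSet] at he hf
        rw [hu a b he hf]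
      have h3 := Set.ncard_union_le {e ∈ H.edgeSet | ∀ v ∈ e, v ∈ ({v : V | v ≠ u} : Set V)}
        {e ∈ H.edgeSet | u ∈ e}
      have h4 := Set.ncard_le_ncard hsplit (Set.toFinite _)
      have h5 := count H {v : V | v ≠ u}
      rw [hcard]
      omega
    · -- V has one element
      have : ∀ v : V, v = u := by
        intro v
        by_contra hv
        exact hV' ⟨⟨v, hv⟩⟩
      have hE : H.edgeSet = ∅ := by
        ext e
        simp only [Set.mem_empty_iff_false, iff_false]
        intro he
        induction e with
        | _ a b =>
          rw [SimpleGraph.mem_edgeSet] at he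
          exact he.ne (by rw [this a, this b])
      rw [hE]
      simpa using Nat.succ_le_of_lt (Fintype.card_pos (α := V))

lemma mem_of_head?_eq {α : Type*} {l : List α} {a : α} (h : l.head? = some a) : a ∈ l := by
  cases l with
  | nil => simp at h
  | cons b t =>
    simp only [List.head?_cons, Option.some.injEq] at h
    subst h
    exact List.mem_cons_self

lemma mem_of_getLast?_eq {α : Type*} {l : List α} {a : α} (h : l.getLast? = some a) : a ∈ l := by
  obtain ⟨h', rfl⟩ := List.mem_getLast?_eq_getLast h
  exact List.getLast_mem h'

lemma start_mem_head?_edges {u v : V} (p : G.Walk u v) {e : Sym2 V}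
    (h : p.edges.head? = some e) : u ∈ e := by
  cases p with
  | nil => simp at h
  | cons hadj q =>
    simp only [Walk.edges_cons, List.head?_cons, Option.some.injEq] at h
    subst h
    simp

lemma end_mem_getLast?_edges {u v : V} (p : G.Walk u v) {e : Sym2 V}
    (h : p.edges.getLast? = some e) : v ∈ e := by
  induction p with
  | nil => simp at h
  | @cons x b y hadj q ih =>
    cases hqe : q.edges with
    | nil =>
      have hb : b = y := Walk.eq_of_length_eq_zero (by rw [← q.length_edges, hqe]; rfl)
      subst hb
      rw [Walk.edges_cons, hqe] at h
      simp only [List.getLast?_singleton, Option.some.injEq] at h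
      subst h
      simp
    | cons c cs =>
      rw [Walk.edges_cons, hqe, List.getLast?_cons_cons] at h
      rw [hqe] at ih
      exact ih h

lemma triangle_isCycle {α : Type*} {K : SimpleGraph α} {a b c : α}
    (hab : K.Adj a b) (hbc : K.Adj b c) (hca : K.Adj c a) :
    (Walk.cons hab (Walk.cons hbc (Walk.cons hca Walk.nil))).IsCycle := by
  have h1 : a ≠ b := hab.ne
  have h2 : b ≠ c := hbc.ne
  have h3 : c ≠ a := hca.ne
  rw [Walk.isCycle_def]
  refine ⟨?_, by simp, ?_⟩
  · rw [Walk.isTrail_def]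
    simp [Sym2.eq_iff]
    tauto
  · simp only [Walk.support_cons, Walk.support_nil, List.tail_cons]
    simp [h2, h3, h1]
    tauto

lemma lineWalk (E' : Set G.edgeSet) :
    ∀ {x y : V} (w : G.Walk x y), w.edges ≠ [] → w.edges.Nodup →
    (∀ e (h : e ∈ w.edges), (⟨e, w.edges_subset_edgeSet h⟩ : G.edgeSet) ∈ E') →
    ∃ (ef el : ↥E') (P : (G.lineGraph.induce E').Walk ef el),
      w.edges.head? = some ((ef : G.edgeSet) : Sym2 V) ∧
      w.edges.getLast? = some ((el : G.edgeSet) : Sym2 V) ∧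
      P.support.map (Subtype.val ∘ Subtype.val) = w.edges := by
  intro x y w
  induction w with
  | nil => intro hne; simp at hne
  | @cons x b y h q ih =>
    intro hne hnodup hmem
    have hmem0 : (⟨s(x, b), h⟩ : G.edgeSet) ∈ E' := by
      have := hmem s(x, b) (by simp)
      convert this using 2
    by_cases hq : q.edges = []
    · refine ⟨⟨⟨s(x, b), h⟩, hmem0⟩, ⟨⟨s(x, b), h⟩, hmem0⟩, Walk.nil, ?_, ?_, ?_⟩
      · simp [Walk.edges_cons, hq]
      · simp [Walk.edges_cons, hq]
      · simp [Walk.support_nil, Walk.edges_cons, hq, Function.comp]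
    · have hnodup' : q.edges.Nodup := (List.nodup_cons.mp (by simpa using hnodup)).2
      have hnotmem : s(x, b) ∉ q.edges := (List.nodup_cons.mp (by simpa using hnodup)).1
      have hmem' : ∀ e (h' : e ∈ q.edges), (⟨e, q.edges_subset_edgeSet h'⟩ : G.edgeSet) ∈ E' := by
        intro e h'
        have := hmem e (by simp [h'])
        convert this using 2
      obtain ⟨ef, el, P, hef, hel, hsup⟩ := ih hq hnodup' hmem'
      have hne2 : (⟨s(x, b), h⟩ : G.edgeSet) ≠ ↑ef := by
        intro heq
        apply hnotmem
        have hv : s(x, b) = ((ef : G.edgeSet) : Sym2 V) := congrArg Subtype.val heq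
        rw [hv]
        exact mem_of_head?_eq hef
      have hb2 : b ∈ ((ef : G.edgeSet) : Sym2 V) := start_mem_head?_edges q hef
      have hadj : (G.lineGraph.induce E').Adj ⟨⟨s(x, b), h⟩, hmem0⟩ ef :=
        lineGraph_adj_iff_exists.mpr ⟨hne2, b, by simp, hb2⟩
      refine ⟨⟨⟨s(x, b), h⟩, hmem0⟩, el, Walk.cons hadj P, by simp, ?_, ?_⟩
      · cases hqe : q.edges with
        | nil => exact absurd hqe hq
        | cons c cs =>
          rw [Walk.edges_cons, hqe, List.getLast?_cons_cons]
          rw [hqe] at hel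
          exact hel
      · rw [Walk.support_cons, Walk.edges_cons, ← hsup]
        simp [Function.comp]


end PartB

section Main
variable {V : Type*}

theorem forward {V : Type*} [Fintype V] [DecidableEq V] (G : SimpleGraph V)
    (u v : V) (p : G.Walk u v) (hp : p.IsPath) (hham : p.IsHamiltonian) :
    ∃ E' : Set G.edgeSet, E'.ncard = Fintype.card V - 1 ∧
      (G.lineGraph.induce E').IsAcyclic := by
  classical
  set E' : Set G.edgeSet := {e | (e : Sym2 V) ∈ p.edges} with hE'
  refine ⟨E', ?_, ?_⟩
  · have h1 : Subtype.val '' E' = {e : Sym2 V | e ∈ p.edges} := by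
      ext e
      constructor
      · rintro ⟨⟨e, he⟩, hmem, rfl⟩; exact hmem
      · intro he; exact ⟨⟨e, p.edges_subset_edgeSet he⟩, he, rfl⟩
    have h2 : E'.ncard = ({e : Sym2 V | e ∈ p.edges} : Set (Sym2 V)).ncard := by
      rw [← h1, Set.ncard_image_of_injective _ Subtype.val_injective]
    have h3 : ({e : Sym2 V | e ∈ p.edges} : Set (Sym2 V)) = ↑p.edges.toFinset := by
      ext e; simp
    rw [h2, h3, Set.ncard_coe_finset, List.toFinset_card_of_nodup hp.isTrail.edges_nodup,
      Walk.length_edges, hham.length_eq]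
  · refine lemA _ (fun e => p.edges.idxOf ((e : G.edgeSet) : Sym2 V)) ?_ ?_
    · intro e1 e2 h
      simp only at h
      have m1 : ((e1 : G.edgeSet) : Sym2 V) ∈ p.edges := e1.2
      have m2 : ((e2 : G.edgeSet) : Sym2 V) ∈ p.edges := e2.2
      have := (List.idxOf_inj m1).mp h
      exact Subtype.ext (Subtype.ext this)
    · intro e1 e2 hadj
      have hadj' : G.lineGraph.Adj ↑e1 ↑e2 := hadj
      obtain ⟨hne, w, hw1, hw2⟩ := lineGraph_adj_iff_exists.mp hadj'
      set i := p.edges.idxOf ((e1 : G.edgeSet) : Sym2 V) with hidef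
      set j := p.edges.idxOf ((e2 : G.edgeSet) : Sym2 V) with hjdef
      have m1 : ((e1 : G.edgeSet) : Sym2 V) ∈ p.edges := e1.2
      have m2 : ((e2 : G.edgeSet) : Sym2 V) ∈ p.edges := e2.2
      have hi : i < p.edges.length := List.idxOf_lt_length_iff.mpr m1
      have hj : j < p.edges.length := List.idxOf_lt_length_iff.mpr m2
      have hi' : i < p.length := by rwa [Walk.length_edges] at hi
      have hj' : j < p.length := by rwa [Walk.length_edges] at hj
      have hvi : ((e1 : G.edgeSet) : Sym2 V) = s(p.getVert i, p.getVert (i + 1)) := by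
        rw [← edges_getElem p i hi']
        exact (List.getElem_idxOf hi).symm
      have hvj : ((e2 : G.edgeSet) : Sym2 V) = s(p.getVert j, p.getVert (j + 1)) := by
        rw [← edges_getElem p j hj']
        exact (List.getElem_idxOf hj).symm
      have hij : i ≠ j := by
        intro h
        apply hne
        apply Subtype.ext
        rw [hvi, hvj, h]
      have key : ∀ k l : ℕ, k ≤ p.length → l ≤ p.length →
          p.getVert k = p.getVert l → k = l := path_getVert_inj hp
      rw [hvi, Sym2.mem_iff] at hw1
      rw [hvj, Sym2.mem_iff] at hw2
      rcases hw1 with rfl | rfl <;> rcases hw2 with h2 | h2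
      · exact absurd (key i j (by omega) (by omega) h2) hij
      · have := key i (j+1) (by omega) (by omega) h2
        omega
      · have := key (i+1) j (by omega) (by omega) h2
        omega
      · have := key (i+1) (j+1) (by omega) (by omega) h2
        omega
    

theorem backward {V : Type*} [Fintype V] [DecidableEq V] (G : SimpleGraph V)
    (hn : 2 ≤ Fintype.card V) (E' : Set G.edgeSet)
    (hcard : E'.ncard = Fintype.card V - 1)
    (hac : (G.lineGraph.induce E').IsAcyclic) :
    ∃ (u v : V) (p : G.Walk u v), p.IsPath ∧ p.IsHamiltonian := by
  classical
  have hnV : Nonempty V := Fintype.card_pos_iff.mp (by omega)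
  set S : Set (Sym2 V) := Subtype.val '' E' with hSdef
  set H : SimpleGraph V := SimpleGraph.fromEdgeSet S with hHdef
  have hle : H ≤ G := by
    intro a b hab
    rw [hHdef, SimpleGraph.fromEdgeSet_adj] at hab
    obtain ⟨⟨⟨e, he⟩, hmem, heq⟩, hne⟩ := hab
    rw [← SimpleGraph.mem_edgeSet]
    rw [← heq]
    exact he
  have hHedge : H.edgeSet = S := by
    rw [hHdef, SimpleGraph.edgeSet_fromEdgeSet]
    ext e
    simp only [Set.mem_diff, Set.mem_setOf_eq]
    refine ⟨fun h => h.1, fun h => ⟨h, ?_⟩⟩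
    obtain ⟨⟨e', he'⟩, hmem, rfl⟩ := h
    exact G.not_isDiag_of_mem_edgeSet he'
  have hScard : S.ncard = Fintype.card V - 1 := by
    rw [hSdef, Set.ncard_image_of_injective _ Subtype.val_injective, hcard]
  have hmemE' : ∀ (e : Sym2 V) (he : e ∈ G.edgeSet), e ∈ S → (⟨e, he⟩ : G.edgeSet) ∈ E' := by
    rintro e he ⟨⟨e2, he2⟩, hm, rfl⟩
    exact hm
  -- H is acyclic
  have hHac : H.IsAcyclic := by
    intro v c hc
    have hcG : (c.mapLe hle).IsCycle := (Walk.mapLe_isCycle hle).mpr hc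
    set cG : G.Walk v v := c.mapLe hle with hcGdef
    have hedgeseq : cG.edges = c.edges := by
      show (c.map _).edges = c.edges
      have hid : ⇑(SimpleGraph.Hom.ofLE hle) = id := rfl
      rw [Walk.edges_map, hid, Sym2.map_id, List.map_id]
    have hlen3 := hcG.three_le_length
    obtain ⟨b, hxb, q, hq⟩ := Walk.not_nil_iff.mp hcG.not_nil
    have hqlen : q.length + 1 = cG.length := by rw [hq]; simp
    have hqedges : q.edges ≠ [] := by
      intro h0
      have : q.length = 0 := by rw [← q.length_edges, h0]; rfl
      omega
    have hnodup : cG.edges.Nodup := hcG.isCircuit.isTrail.edges_nodup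
    have hedgesS : ∀ e ∈ cG.edges, e ∈ S := by
      intro e he
      rw [← hHedge]
      apply c.edges_subset_edgeSet
      rwa [← hedgeseq]
    rw [hq, Walk.edges_cons] at hnodup
    have hnodup' := (List.nodup_cons.mp hnodup).2
    have hnotmem := (List.nodup_cons.mp hnodup).1
    have hxbG : G.Adj v b := hxb
    have hmemq : ∀ e (h' : e ∈ q.edges), (⟨e, q.edges_subset_edgeSet h'⟩ : G.edgeSet) ∈ E' := by
      intro e h'
      apply hmemE'
      apply hedgesS
      rw [hq, Walk.edges_cons]
      exact List.mem_cons_of_mem _ h'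
    obtain ⟨ef, el, P, hef, hel, hsup⟩ := lineWalk E' q hqedges hnodup' hmemq
    have hsup' : P.support.map (Subtype.val ∘ Subtype.val) = q.edges := hsup
    have h0S : s(v, b) ∈ S := by
      apply hedgesS
      rw [hq, Walk.edges_cons]
      exact List.mem_cons_self
    have h0E' : (⟨s(v, b), hxbG⟩ : G.edgeSet) ∈ E' := hmemE' _ _ h0S
    have hfe : b ∈ ((ef : G.edgeSet) : Sym2 V) := start_mem_head?_edges q hef
    have hlv : v ∈ ((el : G.edgeSet) : Sym2 V) := end_mem_getLast?_edges q hel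
    have hne_f : (⟨s(v, b), hxbG⟩ : G.edgeSet) ≠ ↑ef := by
      intro heq
      apply hnotmem
      rw [show s(v, b) = ((ef : G.edgeSet) : Sym2 V) from congrArg Subtype.val heq]
      exact mem_of_head?_eq hef
    have hne_l : (⟨s(v, b), hxbG⟩ : G.edgeSet) ≠ ↑el := by
      intro heq
      apply hnotmem
      rw [show s(v, b) = ((el : G.edgeSet) : Sym2 V) from congrArg Subtype.val heq]
      exact mem_of_getLast?_eq hel
    have hadjf : (G.lineGraph.induce E').Adj ⟨⟨s(v, b), hxbG⟩, h0E'⟩ ef :=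
      lineGraph_adj_iff_exists.mpr ⟨hne_f, b, by simp, hfe⟩
    have hadjl : (G.lineGraph.induce E').Adj ⟨⟨s(v, b), hxbG⟩, h0E'⟩ el :=
      lineGraph_adj_iff_exists.mpr ⟨hne_l, v, by simp, hlv⟩
    have hP' : (Walk.cons hadjf P).IsPath := by
      apply Walk.IsPath.mk'
      have hmapeq : (Walk.cons hadjf P).support.map (Subtype.val ∘ Subtype.val)
          = s(v, b) :: q.edges := by
        rw [Walk.support_cons, List.map_cons, hsup']
        rfl
      have hnd : ((Walk.cons hadjf P).support.map (Subtype.val ∘ Subtype.val)).Nodup := by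
        rw [hmapeq]
        exact hnodup
      exact hnd.of_map _
    have hPeq := hac.path_unique ⟨Walk.cons hadjf P, hP'⟩ (SimpleGraph.Path.singleton hadjl)
    have hlen1 : (Walk.cons hadjf P).length = 1 := by
      have := congrArg (fun r : (G.lineGraph.induce E').Path _ _ => r.val.length) hPeq
      simpa [SimpleGraph.Path.singleton] using this
    have hPsuplen : P.support.length = q.edges.length := by
      rw [← hsup', List.length_map]
    have h1 := P.length_support
    have h2 := q.length_edges
    simp only [Walk.length_cons] at hlen1
    omega
  -- degree bound
  have hdeg : ∀ y a b c : V, H.Adj y a → H.Adj y b → H.Adj y c →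
      a = b ∨ a = c ∨ b = c := by
    intro y a b c ha hb hc
    by_contra hcon
    push_neg at hcon
    obtain ⟨hab, hac2, hbc⟩ := hcon
    have hmS : ∀ z, H.Adj y z → s(y, z) ∈ S := by
      intro z hz
      rw [← hHedge]
      exact hz
    have hGa : G.Adj y a := hle ha
    have hGb : G.Adj y b := hle hb
    have hGc : G.Adj y c := hle hc
    have hab' : (G.lineGraph.induce E').Adj ⟨⟨s(y, a), hGa⟩, hmemE' _ _ (hmS a ha)⟩
        ⟨⟨s(y, b), hGb⟩, hmemE' _ _ (hmS b hb)⟩ :=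
      lineGraph_adj_iff_exists.mpr ⟨by
        intro h
        have h' : s(y, a) = s(y, b) := congrArg Subtype.val h
        exact hab (Sym2.congr_right.mp h'), y, by simp, by simp⟩
    have hbc' : (G.lineGraph.induce E').Adj ⟨⟨s(y, b), hGb⟩, hmemE' _ _ (hmS b hb)⟩
        ⟨⟨s(y, c), hGc⟩, hmemE' _ _ (hmS c hc)⟩ :=
      lineGraph_adj_iff_exists.mpr ⟨by
        intro h
        have h' : s(y, b) = s(y, c) := congrArg Subtype.val h
        exact hbc (Sym2.congr_right.mp h'), y, by simp, by simp⟩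
    have hca' : (G.lineGraph.induce E').Adj ⟨⟨s(y, c), hGc⟩, hmemE' _ _ (hmS c hc)⟩
        ⟨⟨s(y, a), hGa⟩, hmemE' _ _ (hmS a ha)⟩ :=
      lineGraph_adj_iff_exists.mpr ⟨by
        intro h
        have h' : s(y, c) = s(y, a) := congrArg Subtype.val h
        exact hac2 (Sym2.congr_right.mp h').symm, y, by simp, by simp⟩
    exact hac _ (triangle_isCycle hab' hbc' hca')
  -- maximal path
  obtain ⟨u, v, p, hp, hmax⟩ := maxpath H
  have hcover : ∀ x, x ∈ p.support := by
    by_contra hcov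
    push_neg at hcov
    obtain ⟨x, hx⟩ := hcov
    -- no cross edges
    have hnocross : ∀ y z, H.Adj y z → y ∈ p.support → z ∈ p.support := by
      intro y z hyz hy
      by_contra hz
      by_cases hyu : y = u
      · subst hyu
        have hq : (Walk.cons hyz.symm p).IsPath := hp.cons hz
        have := hmax _ _ _ hq
        rw [Walk.length_cons] at this
        omega
      · by_cases hyv : y = v
        · subst hyv
          have hq : (Walk.cons hyz.symm p.reverse).IsPath := hp.reverse.cons (by
            rwa [Walk.support_reverse, List.mem_reverse])
          have := hmax _ _ _ hq
          rw [Walk.length_cons, Walk.length_reverse] at this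
          omega
        · -- internal vertex
          have hq1nn : ¬ (p.takeUntil y hy).Nil :=
            Walk.not_nil_of_ne (fun h => hyu h.symm)
          have hq2nn : ¬ (p.dropUntil y hy).Nil := Walk.not_nil_of_ne hyv
          have hq1rnn : ¬ (p.takeUntil y hy).reverse.Nil := by
            rwa [Walk.nil_iff_length_eq, Walk.length_reverse, ← Walk.nil_iff_length_eq]
          obtain ⟨a1, ha1, r1, hr1⟩ := Walk.not_nil_iff.mp hq1rnn
          obtain ⟨b1, hb1, r2, hr2⟩ := Walk.not_nil_iff.mp hq2nn
          have ha1mem : a1 ∈ (p.takeUntil y hy).support := by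
            have : a1 ∈ (p.takeUntil y hy).reverse.support := by
              rw [hr1]
              rw [Walk.support_cons]
              exact List.mem_cons_of_mem _ r1.start_mem_support
            rwa [Walk.support_reverse, List.mem_reverse] at this
          have hb1mem : b1 ∈ (p.dropUntil y hy).support.tail := by
            rw [hr2, Walk.support_cons, List.tail_cons]
            exact r2.start_mem_support
          have hsupp : p.support = (p.takeUntil y hy).support
              ++ (p.dropUntil y hy).support.tail := by
            conv_lhs => rw [← p.take_spec hy]
            exact Walk.support_append _ _
          have hnd := hp.support_nodup
          rw [hsupp] at hnd
          have hdisj := (List.nodup_append'.mp hnd).2.2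
          have hne_ab : a1 ≠ b1 := by
            intro h
            exact hdisj ha1mem (h ▸ hb1mem)
          have ha1p : a1 ∈ p.support := p.support_takeUntil_subset hy ha1mem
          have hb1p : b1 ∈ p.support :=
            p.support_dropUntil_subset hy (List.mem_of_mem_tail hb1mem)
          have hza : z ≠ a1 := fun h => hz (h ▸ ha1p)
          have hzb : z ≠ b1 := fun h => hz (h ▸ hb1p)
          rcases hdeg y a1 b1 z ha1 hb1 hyz with h | h | h
          · exact hne_ab h
          · exact hza h.symm
          · exact hzb h.symm
    -- counting
    set Sup : Set V := {w | w ∈ p.support} with hSup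
    set Cset : Set V := {w | w ∉ p.support} with hCset
    set A : Set (Sym2 V) := {e ∈ H.edgeSet | ∀ w ∈ e, w ∈ Sup} with hA
    set B : Set (Sym2 V) := {e ∈ H.edgeSet | ∀ w ∈ e, w ∈ Cset} with hB
    have hsplit : H.edgeSet ⊆ A ∪ B := by
      intro e he
      induction e with
      | _ a b =>
        have hadj : H.Adj a b := (H.mem_edgeSet).mp he
        by_cases ha : a ∈ p.support
        · have hb : b ∈ p.support := hnocross a b hadj ha
          left
          refine ⟨he, ?_⟩
          intro w hw
          rcases Sym2.mem_iff.mp hw with rfl | rfl <;> assumption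
        · have hb : b ∉ p.support := fun hb => ha (hnocross b a hadj.symm hb)
          right
          refine ⟨he, ?_⟩
          intro w hw
          rcases Sym2.mem_iff.mp hw with rfl | rfl <;> assumption
    have hAeq : A = {e : Sym2 V | e ∈ p.edges} := by
      ext e
      constructor
      · rintro ⟨he, hend⟩
        induction e with
        | _ a b =>
          exact edge_in_path hHac hp (hend a (Sym2.mem_mk_left a b))
            (hend b (Sym2.mem_mk_right a b)) ((H.mem_edgeSet).mp he)
      · intro he
        refine ⟨p.edges_subset_edgeSet he, ?_⟩
        intro w hw
        induction e with
        | _ a b =>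
          rcases Sym2.mem_iff.mp hw with rfl | rfl
          · exact p.fst_mem_support_of_mem_edges he
          · exact p.snd_mem_support_of_mem_edges he
    have hAcard : A.ncard = p.length := by
      have h3 : A = ↑p.edges.toFinset := by
        rw [hAeq]; ext e; simp
      rw [h3, Set.ncard_coe_finset, List.toFinset_card_of_nodup hp.isTrail.edges_nodup,
        Walk.length_edges]
    have hsplitcard : H.edgeSet.ncard ≤ A.ncard + B.ncard :=
      le_trans (Set.ncard_le_ncard hsplit (Set.toFinite _)) (Set.ncard_union_le A B)
    have hHcard : H.edgeSet.ncard = Fintype.card V - 1 := by rw [hHedge]; exact hScard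
    have hlenlt : p.length + 1 ≤ Fintype.card V := hp.length_lt
    have hSupcard : Sup.ncard = p.length + 1 := by
      have h3 : Sup = ↑p.support.toFinset := by ext w; simp [hSup]
      rw [h3, Set.ncard_coe_finset, List.toFinset_card_of_nodup hp.support_nodup,
        Walk.length_support]
    have hcompl : Cset = Supᶜ := by
      ext w; simp [hCset, hSup]
    have hCcard : Cset.ncard = Fintype.card V - (p.length + 1) := by
      have := Set.ncard_add_ncard_compl Sup (Set.toFinite _)
      rw [hSupcard, Nat.card_eq_fintype_card] at this
      rw [hcompl]
      omega
    have hCne : Nonempty ↥Cset := ⟨⟨x, hx⟩⟩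
    have hCfincard : Fintype.card ↥Cset = Cset.ncard := by
      rw [← Nat.card_eq_fintype_card, Nat.card_coe_set_eq]
    have hlemB := lemB (Fintype.card ↥Cset) (H.induce Cset) (induce_acyclic hHac _)
      rfl hCne
    have hcount := count H Cset
    rw [hcount, hCfincard, hCcard] at hlemB
    -- B.ncard ≥ n - 1 - p.length
    have hxnotin : x ∉ p.support := hx
    have hxcount : (1 : ℕ) ≤ Fintype.card V - (p.length + 1) := by
      have : Cset.ncard ≠ 0 := by
        intro h0
        rw [Set.ncard_eq_zero (Set.toFinite _)] at h0
        rw [hCset] at h0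
        have : x ∈ ({w | w ∉ p.support} : Set V) := hx
        rw [h0] at this
        exact this
      omega
    have hBeq : {e ∈ H.edgeSet | ∀ v ∈ e, v ∈ Cset} = B := rfl
    rw [hBeq] at hlemB
    omega
  -- build the Hamiltonian path in G
  refine ⟨u, v, p.mapLe hle, (Walk.mapLe_isPath hle).mpr hp, ?_⟩
  have hsupeq : (p.mapLe hle).support = p.support := by
    show (p.map _).support = p.support
    have hid : ⇑(SimpleGraph.Hom.ofLE hle) = id := rfl
    rw [Walk.support_map, hid, List.map_id]
  intro a
  rw [hsupeq]
  exact List.count_eq_one_of_mem hp.support_nodup (hcover a)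


end Main

end Stmt4Aux

/-- A finite simple graph `G` on `n ≥ 2` vertices has a Hamiltonian path if and
only if there exists a set `E'` of edges of `G` with `|E'| = n - 1` such that the subgraph of the
line graph `L(G)` induced by `E'` is acyclic (i.e. `L(G)` has an induced forest on `n - 1`
vertices). -/
theorem stmt4 {V : Type*} [Fintype V] [DecidableEq V] (G : SimpleGraph V)
    (hn : 2 ≤ Fintype.card V) :
    (∃ (u v : V) (p : G.Walk u v), p.IsPath ∧ p.IsHamiltonian) ↔
      ∃ E' : Set G.edgeSet, E'.ncard = Fintype.card V - 1 ∧
        (G.lineGraph.induce E').IsAcyclic := by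
  constructor
  · rintro ⟨u, v, p, hp, hham⟩
    exact Stmt4Aux.forward G u v p hp hham
  · rintro ⟨E', hcard, hac⟩
    exact Stmt4Aux.backward G hn E' hcard hac
end

section
/- Let H be a finite simple graph that either contains a cycle or has a connected component containing at least two branch vertices. Let G be any finite simple graph, let s ≥ |V(H)| + 1, and let G* be the s-subdivision of G. Then G* contains no subgraph isomorphic to H; in particular, G* is H-free. -/
/-- The smaller endpoint of an unordered pair of vertices, w.r.t. a linear order. -/
def Sym2.inf' {V : Type*} [LinearOrder V] (e : Sym2 V) : V :=
  Sym2.lift ⟨fun a b => a ⊓ b, fun a b => inf_comm a b⟩ e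

/-- The larger endpoint of an unordered pair of vertices, w.r.t. a linear order. -/
def Sym2.sup' {V : Type*} [LinearOrder V] (e : Sym2 V) : V :=
  Sym2.lift ⟨fun a b => a ⊔ b, fun a b => sup_comm a b⟩ e

/-- The `s`-subdivision `G*` of `G`: every edge `uv` of `G` is replaced by a path
`u, x¹_uv, …, xˢ_uv, v` through `s` new internal vertices; the internal vertices introduced
for distinct edges are pairwise distinct.  The internal vertices of the edge `e` are the pairs
`(e, i)` for `i : Fin s`, laid out from the smaller endpoint of `e` to the larger one. -/
def SimpleGraph.subdivision {V : Type*} [LinearOrder V] (G : SimpleGraph V) (s : ℕ) :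
    SimpleGraph (V ⊕ (G.edgeSet × Fin s)) :=
  SimpleGraph.fromRel fun x y =>
    match x, y with
    | Sum.inl u, Sum.inr (e, i) =>
        (u = Sym2.inf' (e : Sym2 V) ∧ (i : ℕ) = 0) ∨
          (u = Sym2.sup' (e : Sym2 V) ∧ (i : ℕ) = s - 1)
    | Sum.inr (e, i), Sum.inr (f, j) => e = f ∧ (i : ℕ) + 1 = (j : ℕ)
    | _, _ => False

section Aux
variable {V : Type*} [LinearOrder V] {G : SimpleGraph V} {s : ℕ}

lemma inf'_ne_sup' (e : G.edgeSet) : Sym2.inf' (e : Sym2 V) ≠ Sym2.sup' (e : Sym2 V) := by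
  obtain ⟨e, he⟩ := e
  induction e with
  | _ a b =>
    rw [SimpleGraph.mem_edgeSet] at he
    simpa [Sym2.inf', Sym2.sup', inf_eq_sup] using he.ne

lemma adj_inl_inr {u : V} {e : G.edgeSet} {i : Fin s}
    (h : (G.subdivision s).Adj (Sum.inl u) (Sum.inr (e, i))) :
    (u = Sym2.inf' (e : Sym2 V) ∧ (i : ℕ) = 0) ∨
      (u = Sym2.sup' (e : Sym2 V) ∧ (i : ℕ) = s - 1) := by
  rw [SimpleGraph.subdivision, SimpleGraph.fromRel_adj] at h
  simpa using h.2

lemma adj_inr_inr {e f : G.edgeSet} {i j : Fin s}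
    (h : (G.subdivision s).Adj (Sum.inr (e, i)) (Sum.inr (f, j))) :
    e = f ∧ ((i : ℕ) + 1 = (j : ℕ) ∨ (j : ℕ) + 1 = (i : ℕ)) := by
  rw [SimpleGraph.subdivision, SimpleGraph.fromRel_adj] at h
  rcases h.2 with ⟨h1, h2⟩ | ⟨h1, h2⟩
  · exact ⟨h1, Or.inl h2⟩
  · exact ⟨h1.symm, Or.inr h2⟩

lemma not_adj_inl_inl {u v : V} : ¬ (G.subdivision s).Adj (Sum.inl u) (Sum.inl v) := by
  rw [SimpleGraph.subdivision, SimpleGraph.fromRel_adj]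
  simp

lemma nbr_inl {u : V} {z} (h : (G.subdivision s).Adj (Sum.inl u) z) :
    ∃ (e : G.edgeSet) (i : Fin s), z = Sum.inr (e, i) := by
  match z with
  | Sum.inl w => exact absurd h not_adj_inl_inl
  | Sum.inr (e, i) => exact ⟨e, i, rfl⟩

end Aux

section Pos
variable {V : Type*} [LinearOrder V] {G : SimpleGraph V} {s : ℕ}

/-- Vertices on the subdivided edge `e`, indexed by position `0,…,s+1` from the smaller
endpoint. -/
def posV (G : SimpleGraph V) (s : ℕ) (e : G.edgeSet) (p : ℕ) : V ⊕ (G.edgeSet × Fin s) :=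
  if h : 0 < p ∧ p < s + 1 then Sum.inr (e, ⟨p - 1, by omega⟩)
  else if p = 0 then Sum.inl (Sym2.inf' (e : Sym2 V)) else Sum.inl (Sym2.sup' (e : Sym2 V))

lemma nbr_pos (hs2 : 2 ≤ s) {e : G.edgeSet} {i : Fin s} {z}
    (h : (G.subdivision s).Adj (Sum.inr (e, i)) z) :
    ∃ p, z = posV G s e p ∧ (p = (i : ℕ) ∨ p = (i : ℕ) + 2) := by
  have hi := i.isLt
  match z with
  | Sum.inl w =>
    rcases adj_inl_inr h.symm with ⟨rfl, h2⟩ | ⟨rfl, h2⟩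
    · exact ⟨0, by simp [posV], Or.inl h2.symm⟩
    · exact ⟨s + 1, by rw [posV, dif_neg (by omega), if_neg (by omega)], Or.inr (by omega)⟩
  | Sum.inr (f, j) =>
    have hj := j.isLt
    obtain ⟨rfl, h2 | h2⟩ := adj_inr_inr h
    · refine ⟨(i : ℕ) + 2, ?_, Or.inr rfl⟩
      rw [posV, dif_pos (by omega)]
      simp only [Sum.inr.injEq, Prod.mk.injEq, Fin.ext_iff, true_and, Fin.val_mk]
      omega
    · refine ⟨(i : ℕ), ?_, Or.inl rfl⟩
      rw [posV, dif_pos (by omega)]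
      simp only [Sum.inr.injEq, Prod.mk.injEq, Fin.ext_iff, true_and, Fin.val_mk]
      omega

/-- An internal vertex with three pairwise distinct neighbours is impossible; only `inl`
vertices can have three distinct neighbours. -/
lemma inl_of_three (hs2 : 2 ≤ s) {z a b c : V ⊕ (G.edgeSet × Fin s)}
    (ha : (G.subdivision s).Adj z a) (hb : (G.subdivision s).Adj z b)
    (hc : (G.subdivision s).Adj z c) (hab : a ≠ b) (hac : a ≠ c) (hbc : b ≠ c) :
    ∃ w, z = Sum.inl w := by
  match z with
  | Sum.inl w => exact ⟨w, rfl⟩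
  | Sum.inr (e, i) =>
    obtain ⟨pa, rfl, hpa⟩ := nbr_pos hs2 ha
    obtain ⟨pb, rfl, hpb⟩ := nbr_pos hs2 hb
    obtain ⟨pc, rfl, hpc⟩ := nbr_pos hs2 hc
    have h1 : pa ≠ pb := fun h => hab (by rw [h])
    have h2 : pa ≠ pc := fun h => hac (by rw [h])
    have h3 : pb ≠ pc := fun h => hbc (by rw [h])
    omega

end Pos

section Prop2
variable {V : Type*} [LinearOrder V] {G : SimpleGraph V} {s : ℕ}

lemma step_mem (hs2 : 2 ≤ s) {S : Set (V ⊕ (G.edgeSet × Fin s))}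
    (hS : ∀ z ∈ S, ∃ a b, a ≠ b ∧ a ∈ S ∧ b ∈ S ∧
      (G.subdivision s).Adj z a ∧ (G.subdivision s).Adj z b)
    {e : G.edgeSet} {i : Fin s} (hi : Sum.inr (e, i) ∈ S) :
    posV G s e (i : ℕ) ∈ S ∧ posV G s e ((i : ℕ) + 2) ∈ S := by
  obtain ⟨a, b, hab, haS, hbS, ha, hb⟩ := hS _ hi
  obtain ⟨pa, rfl, hpa⟩ := nbr_pos hs2 ha
  obtain ⟨pb, rfl, hpb⟩ := nbr_pos hs2 hb
  have h1 : pa ≠ pb := fun h => hab (by rw [h])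
  have h2 : (pa = (i : ℕ) ∧ pb = (i : ℕ) + 2) ∨ (pb = (i : ℕ) ∧ pa = (i : ℕ) + 2) := by omega
  rcases h2 with ⟨rfl, rfl⟩ | ⟨rfl, rfl⟩
  · exact ⟨haS, hbS⟩
  · exact ⟨hbS, haS⟩

lemma all_mem (hs2 : 2 ≤ s) {S : Set (V ⊕ (G.edgeSet × Fin s))}
    (hS : ∀ z ∈ S, ∃ a b, a ≠ b ∧ a ∈ S ∧ b ∈ S ∧
      (G.subdivision s).Adj z a ∧ (G.subdivision s).Adj z b)
    {e : G.edgeSet} {i₀ : Fin s} (h0 : Sum.inr (e, i₀) ∈ S) :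
    ∀ j : Fin s, Sum.inr (e, j) ∈ S := by
  have down : ∀ n (i : Fin s), (i : ℕ) = n → Sum.inr (e, i) ∈ S →
      Sum.inr (e, (⟨0, by omega⟩ : Fin s)) ∈ S := by
    intro n
    induction n with
    | zero =>
      intro i h0 hi
      have : i = ⟨0, by omega⟩ := Fin.ext (by simp [h0])
      rwa [← this]
    | succ k ih =>
      intro i hk hi
      have hlt := i.isLt
      have h1 := (step_mem hs2 hS hi).1
      rw [posV, dif_pos (by omega)] at h1
      exact ih ⟨(i : ℕ) - 1, by omega⟩ (by simp; omega) h1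
  have base : Sum.inr (e, (⟨0, by omega⟩ : Fin s)) ∈ S := down _ i₀ rfl h0
  have up : ∀ d (hd : d < s), Sum.inr (e, (⟨d, hd⟩ : Fin s)) ∈ S := by
    intro d
    induction d with
    | zero => intro hd; exact base
    | succ k ih =>
      intro hd
      have hk := ih (by omega)
      have h2 := (step_mem hs2 hS hk).2
      rw [posV, dif_pos (by simp; omega)] at h2
      convert h2 using 4
      simp only [Fin.val_mk]
      omega
  intro j
  have := up (j : ℕ) j.isLt
  simpa using this

end Prop2

section Theta
variable {V : Type*} [LinearOrder V] {G : SimpleGraph V} {s : ℕ}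

/-- Truncated distance to the vertex `inl u'` in the subdivision. -/
def theta (G : SimpleGraph V) (s : ℕ) (u' : V) : (V ⊕ (G.edgeSet × Fin s)) → ℕ
  | Sum.inl w => if w = u' then 0 else s + 1
  | Sum.inr (e, i) =>
      if Sym2.inf' (e : Sym2 V) = u' then (i : ℕ) + 1
      else if Sym2.sup' (e : Sym2 V) = u' then s - (i : ℕ) else s + 1

lemma theta_adj (u' : V) {x y : V ⊕ (G.edgeSet × Fin s)} (h : (G.subdivision s).Adj x y) :
    theta G s u' y ≤ theta G s u' x + 1 := by
  have key : ∀ (u : V) (e : G.edgeSet) (i : Fin s),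
      ((u = Sym2.inf' (e : Sym2 V) ∧ (i : ℕ) = 0) ∨
        (u = Sym2.sup' (e : Sym2 V) ∧ (i : ℕ) = s - 1)) →
      theta G s u' (Sum.inr (e, i)) ≤ theta G s u' (Sum.inl u) + 1 ∧
      theta G s u' (Sum.inl u) ≤ theta G s u' (Sum.inr (e, i)) + 1 := by
    intro u e i hrel
    have hne := inf'_ne_sup' e
    have hlt := i.isLt
    rcases hrel with ⟨rfl, h0⟩ | ⟨rfl, h0⟩ <;>
      · simp only [theta]
        split_ifs <;> first | omega | (exfalso; apply hne; omega) |
          (exfalso; apply hne; subst_vars; first | rfl | (apply Eq.symm; assumption) | assumption)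
  match x, y with
  | Sum.inl u, Sum.inl v => exact absurd h not_adj_inl_inl
  | Sum.inl u, Sum.inr (e, i) => exact (key u e i (adj_inl_inr h)).1
  | Sum.inr (e, i), Sum.inl u => exact (key u e i (adj_inl_inr h.symm)).2
  | Sum.inr (e, i), Sum.inr (f, j) =>
    obtain ⟨rfl, hij⟩ := adj_inr_inr h
    have hlt := i.isLt
    have hlt' := j.isLt
    simp only [theta]
    split_ifs <;> omega

lemma theta_walk (u' : V) {x y : V ⊕ (G.edgeSet × Fin s)}
    (p : (G.subdivision s).Walk x y) :
    theta G s u' y ≤ theta G s u' x + p.length := by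
  induction p with
  | nil => simp
  | cons h q ih =>
    have := theta_adj (G := G) (s := s) u' h
    simp only [SimpleGraph.Walk.length_cons]
    omega

end Theta

section Cyc
open SimpleGraph Walk in
lemma cycle_two_nbrs {W : Type*} {H : SimpleGraph W} {v w : W} {c : H.Walk v v}
    (hc : c.IsCycle) (hw : w ∈ c.support) :
    ∃ x y, x ≠ y ∧ x ∈ c.support ∧ y ∈ c.support ∧ H.Adj w x ∧ H.Adj w y := by
  classical
  set c' := c.rotate w hw with hc'def
  have hc' : c'.IsCycle := hc.rotate hw
  have transfer : ∀ z, z ∈ c'.support → z ∈ c.support := by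
    intro z hz
    rcases (SimpleGraph.Walk.mem_support_iff _).mp hz with rfl | hz'
    · exact hw
    · exact List.mem_of_mem_tail
        (((SimpleGraph.Walk.support_rotate c w hw).mem_iff).mp hz')
  have hnn : ¬ c'.Nil := hc'.not_nil
  have hlen : 3 ≤ c'.length := hc'.three_le_length
  set x := c'.getVert 1 with hx
  have hadjx : H.Adj w x := c'.adj_snd hnn
  set q := c'.tail with hq
  have hcons : SimpleGraph.Walk.cons hadjx q = c' := SimpleGraph.Walk.cons_tail_eq c' hnn
  have hcyc : (SimpleGraph.Walk.cons hadjx q).IsCycle := by rwa [hcons]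
  rw [SimpleGraph.Walk.cons_isCycle_iff] at hcyc
  have hqlen : 2 ≤ q.length := by
    have := SimpleGraph.Walk.length_tail_add_one hnn
    rw [← hq] at this
    omega
  have hqrnn : ¬ q.reverse.Nil := by
    rw [SimpleGraph.Walk.not_nil_iff_lt_length, SimpleGraph.Walk.length_reverse]
    omega
  set y := q.reverse.getVert 1 with hy
  have hadjy : H.Adj w y := q.reverse.adj_snd hqrnn
  have hymem : y ∈ q.support := by
    have : y ∈ q.reverse.support := by
      rw [SimpleGraph.Walk.mem_support_iff_exists_getVert]
      exact ⟨1, rfl, by rw [SimpleGraph.Walk.length_reverse]; omega⟩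
    rw [SimpleGraph.Walk.support_reverse, List.mem_reverse] at this
    exact this
  have hxy : x ≠ y := by
    intro hxyeq
    apply hcyc.2
    have hmem : s(w, y) ∈ q.reverse.edges := by
      have h2 := SimpleGraph.Walk.cons_tail_eq q.reverse hqrnn
      rw [← h2, SimpleGraph.Walk.edges_cons]
      exact List.mem_cons_self
    rw [SimpleGraph.Walk.edges_reverse, List.mem_reverse] at hmem
    rw [show s(w, x) = s(w, y) from congrArg (fun t => s(w, t)) hxyeq]
    exact hmem
  refine ⟨x, y, hxy, ?_, ?_, hadjx, hadjy⟩
  · refine transfer x ?_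
    rw [SimpleGraph.Walk.mem_support_iff_exists_getVert]
    exact ⟨1, rfl, by omega⟩
  · refine transfer y ?_
    rw [← hcons, SimpleGraph.Walk.support_cons]
    exact List.mem_cons_of_mem _ hymem

end Cyc

/-- Let `H` be a finite simple graph that either contains a cycle or has a
connected component containing at least two branch vertices (vertices of degree at least 3).
Let `G` be any finite simple graph, let `s ≥ |V(H)| + 1`, and let `G*` be the `s`-subdivision
of `G`.  Then `G*` contains no subgraph isomorphic to `H` (there is no injective graph
homomorphism `H →g G*`); in particular `G*` is `H`-free (there is no graph embedding
`H ↪g G*`, i.e. no induced subgraph of `G*` is isomorphic to `H`). -/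
theorem stmt9 {W V : Type*} [Fintype W] [Fintype V] [LinearOrder V]
    (H : SimpleGraph W)
    (hH : (∃ (v : W) (c : H.Walk v v), c.IsCycle) ∨
      ∃ u v : W, u ≠ v ∧ H.Reachable u v ∧
        3 ≤ (H.neighborSet u).ncard ∧ 3 ≤ (H.neighborSet v).ncard)
    (G : SimpleGraph V) (s : ℕ) (hs : Fintype.card W + 1 ≤ s) :
    (∀ f : H →g G.subdivision s, ¬ Function.Injective f) ∧
      IsEmpty (H ↪g G.subdivision s) := by
  have main : ∀ f : H →g G.subdivision s, ¬ Function.Injective f := by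
    intro f hf
    classical
    rcases hH with ⟨v, c, hc⟩ | ⟨u, v, huv, hr, hu3, hv3⟩
    · -- cycle case
      have hW1 : 1 ≤ Fintype.card W := Fintype.card_pos_iff.mpr ⟨v⟩
      have hs2 : 2 ≤ s := by omega
      set S : Set (V ⊕ (G.edgeSet × Fin s)) := f '' {x | x ∈ c.support} with hSdef
      have hS : ∀ z ∈ S, ∃ a b, a ≠ b ∧ a ∈ S ∧ b ∈ S ∧
          (G.subdivision s).Adj z a ∧ (G.subdivision s).Adj z b := by
        rintro z ⟨w, hw, rfl⟩
        obtain ⟨x, y, hxy, hxs, hys, hax, hay⟩ := cycle_two_nbrs hc hw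
        exact ⟨f x, f y, fun h => hxy (hf h), ⟨x, hxs, rfl⟩, ⟨y, hys, rfl⟩,
          f.map_adj hax, f.map_adj hay⟩
      have hvS : f v ∈ S := ⟨v, c.start_mem_support, rfl⟩
      obtain ⟨e, i₀, h0⟩ : ∃ (e : G.edgeSet) (i₀ : Fin s), Sum.inr (e, i₀) ∈ S := by
        match hfv : f v with
        | Sum.inl w =>
          obtain ⟨a, b, hab, haS, hbS, ha, hb⟩ := hS _ (hfv ▸ hvS)
          obtain ⟨e, i, rfl⟩ := nbr_inl ha
          exact ⟨e, i, haS⟩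
        | Sum.inr (e, i) => exact ⟨e, i, hfv ▸ hvS⟩
      have hall := all_mem hs2 hS h0
      have hmem : ∀ j : Fin s, ∃ w, w ∈ c.support ∧ f w = Sum.inr (e, j) := by
        intro j
        obtain ⟨w, hw, hfw⟩ := hall j
        exact ⟨w, hw, hfw⟩
      choose g hg1 hg2 using hmem
      have ginj : Function.Injective g := by
        intro a b hab
        have h1 : (Sum.inr (e, a) : V ⊕ (G.edgeSet × Fin s)) = Sum.inr (e, b) := by
          rw [← hg2 a, ← hg2 b, hab]
        simpa using h1
      have := Fintype.card_le_of_injective g ginj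
      rw [Fintype.card_fin] at this
      omega
    · -- branch case
      have hW1 : 1 ≤ Fintype.card W := Fintype.card_pos_iff.mpr ⟨v⟩
      have hs2 : 2 ≤ s := by omega
      have getinl : ∀ w : W, 3 ≤ (H.neighborSet w).ncard → ∃ w', f w = Sum.inl w' := by
        intro w hw
        obtain ⟨a, ha, b, hb, c', hc', hab, hac, hbc⟩ :=
          (Set.two_lt_ncard (H.neighborSet w).toFinite).mp (by omega)
        exact inl_of_three hs2 (f.map_adj ha) (f.map_adj hb) (f.map_adj hc')
          (fun h => hab (hf h)) (fun h => hac (hf h)) (fun h => hbc (hf h))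
      obtain ⟨u', hu'⟩ := getinl u hu3
      obtain ⟨v', hv'⟩ := getinl v hv3
      have hne : v' ≠ u' := by
        intro h
        apply huv
        apply hf
        rw [hu', hv', h]
      obtain ⟨p0⟩ := hr
      have hp : p0.bypass.IsPath := SimpleGraph.Walk.bypass_isPath p0
      have hlen : p0.bypass.length < Fintype.card W := hp.length_lt
      have hq := theta_walk (G := G) (s := s) u' (SimpleGraph.Walk.map f p0.bypass)
      rw [SimpleGraph.Walk.length_map, hu', hv'] at hq
      simp only [theta, if_pos rfl, if_neg hne, if_true] at hq
      omega
  exact ⟨main, ⟨fun emb => main emb.toHom emb.injective⟩⟩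
end
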